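/- The hyperspace CL(S_ω) with the Fell topology is not Fréchet–Urysohn, where S_ω is the countable sequential fan. -/

import Mathlib

open Set Filter Topology

/-- `CL X`: the nonempty closed subsets of `X`. -/
abbrev CL (X : Type*) [TopologicalSpace X] := {A : Set X // A.Nonempty ∧ IsClosed A}

/-- An `ω^ω`-base of neighborhoods at a point `y` of a space with topology `t`:
a neighborhood base `{U_α : α ∈ ω^ω}` with `U_β ⊆ U_α` whenever `α ≤ β` pointwise. -/
def HasOmegaOmegaBaseAt {Y : Type*} (t : TopologicalSpace Y) (y : Y) : Prop :=
  ∃ U : (ℕ → ℕ) → Set Y, (∀ α, U α ∈ @nhds Y t y) ∧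
    (∀ α β : ℕ → ℕ, α ≤ β → U β ⊆ U α) ∧
    ∀ V ∈ @nhds Y t y, ∃ α, U α ⊆ V

/-- The Vietoris topology on `CL X`, generated by the sets `U⁺` and `U⁻` for `U` open. -/
def vietoris (X : Type*) [TopologicalSpace X] : TopologicalSpace (CL X) :=
  TopologicalSpace.generateFrom
    ({S | ∃ U : Set X, IsOpen U ∧ S = {A : CL X | (A : Set X) ⊆ U}} ∪
     {S | ∃ U : Set X, IsOpen U ∧ S = {A : CL X | ((A : Set X) ∩ U).Nonempty}})

/-- The Fell topology on `CL X`, generated by the sets `U⁻` for `U` open and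
`(Kᶜ)⁺` for `K` compact. -/
def fell (X : Type*) [TopologicalSpace X] : TopologicalSpace (CL X) :=
  TopologicalSpace.generateFrom
    ({S | ∃ U : Set X, IsOpen U ∧ S = {A : CL X | ((A : Set X) ∩ U).Nonempty}} ∪
     {S | ∃ K : Set X, IsCompact K ∧ S = {A : CL X | (A : Set X) ⊆ Kᶜ}})

/-- The sequential fan `S_ω`: `none` is the point `x`, and `some (n, i)` is the point
`x_i(n)` of the `n`-th convergent sequence. -/
def SeqFan := Option (ℕ × ℕ)

/-- Topology of `S_ω`: all points `x_i(n)` are isolated and the basic neighborhoods of `x`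
are the sets `{x} ∪ {x_i(n) : i > f(n), n ∈ ω}` for `f ∈ ω^ω`. -/
instance : TopologicalSpace SeqFan :=
  TopologicalSpace.generateFrom
    ({S | ∃ p : ℕ × ℕ, S = {Option.some p}} ∪
     {S | ∃ f : ℕ → ℕ, S = insert Option.none
        {q : SeqFan | ∃ n i : ℕ, f n < i ∧ q = Option.some (n, i)}})

namespace FanAux

/-- tail neighborhood of the fan point -/
def Utail (f : ℕ → ℕ) : Set SeqFan :=
  insert Option.none {q : SeqFan | ∃ n i : ℕ, f n < i ∧ q = Option.some (n, i)}

lemma isOpen_Utail (f : ℕ → ℕ) : IsOpen (Utail f) :=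
  TopologicalSpace.isOpen_generateFrom_of_mem (Or.inr ⟨f, rfl⟩)

lemma isOpen_singleton_some (p : ℕ × ℕ) : IsOpen ({Option.some p} : Set SeqFan) :=
  TopologicalSpace.isOpen_generateFrom_of_mem (Or.inl ⟨p, rfl⟩)

/-- hypograph set -/
def Bset (g : ℕ → ℕ) : Set SeqFan := {q | ∃ n i : ℕ, i < g n ∧ q = Option.some (n, i)}

lemma some_mem_Bset {g : ℕ → ℕ} {n i : ℕ} :
    Option.some (n, i) ∈ Bset g ↔ i < g n := by
  constructor
  · rintro ⟨n', i', hi', he⟩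
    obtain ⟨rfl, rfl⟩ : n = n' ∧ i = i' := by
      have := Option.some.inj he
      exact ⟨congrArg Prod.fst this, congrArg Prod.snd this⟩
    exact hi'
  · intro h; exact ⟨n, i, h, rfl⟩

lemma none_not_mem_Bset {g : ℕ → ℕ} : Option.none ∉ Bset g := by
  rintro ⟨n, i, _, h⟩; exact nomatch h

lemma isClosed_Bset (g : ℕ → ℕ) : IsClosed (Bset g) := by
  have hcomp : (Bset g)ᶜ = Utail g ∪ ⋃ n : ℕ, {Option.some (n, g n)} := by
    ext q
    constructor
    · intro hq
      rcases q with _ | ⟨n, i⟩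
      · exact Or.inl (mem_insert _ _)
      · have hni : ¬ i < g n := fun hi => hq (some_mem_Bset.mpr hi)
        rcases Nat.lt_or_ge (g n) i with hlt | hge
        · exact Or.inl (mem_insert_of_mem _ ⟨n, i, hlt, rfl⟩)
        · have : i = g n := le_antisymm hge (Nat.le_of_not_lt hni)
          subst this
          exact Or.inr (mem_iUnion.mpr ⟨n, rfl⟩)
    · intro hq hq'
      obtain ⟨n, i, hi, rfl⟩ := hq'
      rcases hq with hq | hq
      · rcases hq with hq | ⟨n', i', hi', he⟩
        · exact nomatch hq
        · obtain ⟨rfl, rfl⟩ : n = n' ∧ i = i' := by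
            have := Option.some.inj he
            exact ⟨congrArg Prod.fst this, congrArg Prod.snd this⟩
          exact absurd hi (Nat.lt_asymm hi')
      · obtain ⟨m, hm⟩ := mem_iUnion.mp hq
        have : (n, i) = (m, g m) := Option.some.inj hm
        obtain ⟨rfl, rfl⟩ : n = m ∧ i = g m :=
          ⟨congrArg Prod.fst this, congrArg Prod.snd this⟩
        exact lt_irrefl _ hi
  rw [← isOpen_compl_iff, hcomp]
  exact (isOpen_Utail g).union (isOpen_iUnion fun n => isOpen_singleton_some _)

lemma isClosed_none : IsClosed ({Option.none} : Set SeqFan) := by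
  have hcomp : ({Option.none} : Set SeqFan)ᶜ = ⋃ p : ℕ × ℕ, {Option.some p} := by
    ext q
    rcases q with _ | p
    · exact ⟨fun h => absurd rfl h, fun h => by
        obtain ⟨p, hp⟩ := mem_iUnion.mp h
        exact absurd (mem_singleton_iff.mp hp).symm (Option.some_ne_none p)⟩
    · exact ⟨fun _ => mem_iUnion.mpr ⟨p, rfl⟩, fun _ h =>
        Option.some_ne_none p (mem_singleton_iff.mp h)⟩
  rw [← isOpen_compl_iff, hcomp]
  exact isOpen_iUnion fun p => isOpen_singleton_some p

/-- compact sets missing the fan point are finite -/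
lemma finite_of_compact {K : Set SeqFan} (hK : IsCompact K) (hnone : Option.none ∉ K) :
    K.Finite := by
  have hcover : K ⊆ ⋃ p : ℕ × ℕ, {Option.some p} := by
    intro q hq
    rcases q with _ | p
    · exact absurd hq hnone
    · exact mem_iUnion.mpr ⟨p, rfl⟩
  obtain ⟨t, ht⟩ := hK.elim_finite_subcover (fun p : ℕ × ℕ => {Option.some p})
    (fun p => isOpen_singleton_some p) hcover
  apply Set.Finite.subset (t.finite_toSet.image Option.some)
  intro q hq
  obtain ⟨p, hp, hq'⟩ := mem_iUnion₂.mp (ht hq)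
  exact ⟨p, hp, hq'.symm⟩

/-- every open set containing the fan point contains a tail set -/
lemma exists_tail_subset : ∀ {U : Set SeqFan}, IsOpen U → Option.none ∈ U →
    ∃ f : ℕ → ℕ, ∀ n i : ℕ, f n < i → Option.some (n, i) ∈ U := by
  intro U hU
  have hU' : TopologicalSpace.GenerateOpen
      ({S | ∃ p : ℕ × ℕ, S = {Option.some p}} ∪
       {S | ∃ f : ℕ → ℕ, S = insert Option.none
          {q : SeqFan | ∃ n i : ℕ, f n < i ∧ q = Option.some (n, i)}}) U := hU
  clear hU
  induction hU' with
  | basic s hs =>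
    rcases hs with ⟨p, rfl⟩ | ⟨f, rfl⟩
    · intro h; exact nomatch (mem_singleton_iff.mp h)
    · intro _
      exact ⟨f, fun n i hi => mem_insert_of_mem _ ⟨n, i, hi, rfl⟩⟩
  | univ => intro _; exact ⟨fun _ => 0, fun n i _ => mem_univ _⟩
  | inter s t hso hto ihs iht =>
    intro h
    obtain ⟨fs, hfs⟩ := ihs h.1
    obtain ⟨ft, hft⟩ := iht h.2
    exact ⟨fs ⊔ ft, fun n i hi =>
      ⟨hfs n i (lt_of_le_of_lt le_sup_left hi), hft n i (lt_of_le_of_lt le_sup_right hi)⟩⟩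
  | sUnion S hS ih =>
    intro h
    obtain ⟨s, hsS, hns⟩ := h
    obtain ⟨f, hf⟩ := ih s hsS hns
    exact ⟨f, fun n i hi => ⟨s, hsS, hf n i hi⟩⟩

end FanAux

namespace FanAux

/-- the canonical member of the approximating family -/
def gfun (f : ℕ → ℕ) (s : Finset ℕ) : ℕ → ℕ := fun n => if n ∈ s then 0 else f n + 2

lemma bset_gfun_nonempty (f : ℕ → ℕ) (s : Finset ℕ) : (Bset (gfun f s)).Nonempty := by
  obtain ⟨n, hn⟩ := Infinite.exists_notMem_finset s
  exact ⟨Option.some (n, 0), n, 0, by simp [gfun, hn], rfl⟩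

def BCL (f : ℕ → ℕ) (s : Finset ℕ) : CL SeqFan :=
  ⟨Bset (gfun f s), bset_gfun_nonempty f s, isClosed_Bset _⟩

/-- the fan point as an element of the hyperspace -/
def Apoint : CL SeqFan :=
  ⟨{Option.none}, ⟨Option.none, rfl⟩, isClosed_none⟩

def col (q : SeqFan) : ℕ := (Option.getD (α := ℕ × ℕ) q (0, 0)).1

lemma key : ∀ {O : Set (CL SeqFan)},
    TopologicalSpace.GenerateOpen
      ({S | ∃ U : Set SeqFan, IsOpen U ∧ S = {A : CL SeqFan | ((A : Set SeqFan) ∩ U).Nonempty}} ∪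
       {S | ∃ K : Set SeqFan, IsCompact K ∧ S = {A : CL SeqFan | (A : Set SeqFan) ⊆ Kᶜ}}) O →
    Apoint ∈ O →
    ∃ (f₀ : ℕ → ℕ) (s₀ : Finset ℕ), ∀ (f : ℕ → ℕ) (s : Finset ℕ),
      f₀ ≤ f → s₀ ⊆ s → BCL f s ∈ O := by
  intro O hO
  induction hO with
  | basic S hS =>
    rcases hS with ⟨U, hUopen, rfl⟩ | ⟨K, hKcomp, rfl⟩
    · intro hA
      have hnone : Option.none ∈ U := by
        obtain ⟨q, hq1, hq2⟩ := hA
        have : q = Option.none := hq1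
        rwa [this] at hq2
      obtain ⟨f₀, hf₀⟩ := exists_tail_subset hUopen hnone
      refine ⟨f₀, ∅, fun f s hf _ => ?_⟩
      obtain ⟨n, hn⟩ := Infinite.exists_notMem_finset s
      refine ⟨Option.some (n, f n + 1), ?_, ?_⟩
      · exact some_mem_Bset.mpr (by simp [gfun, hn])
      · exact hf₀ n (f n + 1) (lt_of_le_of_lt (hf n) (Nat.lt_succ_self _))
    · intro hA
      have hnone : Option.none ∉ K := fun h => hA rfl h
      have hKfin : K.Finite := finite_of_compact hKcomp hnone
      refine ⟨fun _ => 0, hKfin.toFinset.image col, fun f s _ hs => ?_⟩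
      rintro q ⟨n, i, hi, rfl⟩ hqK
      have hns : n ∉ s := by
        intro hn
        simp [gfun, hn] at hi
      exact hns (hs (Finset.mem_image.mpr ⟨_, hKfin.mem_toFinset.mpr hqK, rfl⟩))
  | univ => exact fun _ => ⟨fun _ => 0, ∅, fun _ _ _ _ => mem_univ _⟩
  | inter s t hso hto ihs iht =>
    intro hA
    obtain ⟨f₁, s₁, H₁⟩ := ihs hA.1
    obtain ⟨f₂, s₂, H₂⟩ := iht hA.2
    exact ⟨f₁ ⊔ f₂, s₁ ∪ s₂, fun f s hf hs =>
      ⟨H₁ f s (le_trans le_sup_left hf) (le_trans Finset.subset_union_left hs),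
       H₂ f s (le_trans le_sup_right hf) (le_trans Finset.subset_union_right hs)⟩⟩
  | sUnion S hS ih =>
    intro hA
    obtain ⟨t, htS, hAt⟩ := hA
    obtain ⟨f₀, s₀, H⟩ := ih t htS hAt
    exact ⟨f₀, s₀, fun f s hf hs => ⟨t, htS, H f s hf hs⟩⟩

end FanAux


open FanAux in
/-- `(CL(S_ω), τ_F)` is not Fréchet–Urysohn. -/
theorem hyperspace_fell_seqFan_not_frechetUrysohn :
    ¬ @FrechetUrysohnSpace (CL SeqFan) (fell SeqFan) := by
  intro hFU
  letI : TopologicalSpace (CL SeqFan) := fell SeqFan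
  haveI := hFU
  have hAcl : Apoint ∈ closure {B : CL SeqFan | ∃ g : ℕ → ℕ, (B : Set SeqFan) = Bset g} := by
    rw [mem_closure_iff]
    intro O hO hAO
    obtain ⟨f₀, s₀, H⟩ := key hO hAO
    exact ⟨BCL f₀ s₀, H f₀ s₀ le_rfl (Finset.Subset.refl _), ⟨gfun f₀ s₀, rfl⟩⟩
  obtain ⟨u, hu, hlim⟩ := mem_closure_iff_seq_limit.mp hAcl
  choose g hg using hu
  -- each column eventually vanishes
  have hzero : ∀ n : ℕ, ∀ᶠ j in atTop, g j n = 0 := by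
    intro n
    have hOopen : IsOpen {B : CL SeqFan |
        (B : Set SeqFan) ⊆ ({Option.some (n, 0)} : Set SeqFan)ᶜ} :=
      TopologicalSpace.isOpen_generateFrom_of_mem
        (Or.inr ⟨{Option.some (n, 0)}, isCompact_singleton, rfl⟩)
    have hAin : Apoint ∈ {B : CL SeqFan |
        (B : Set SeqFan) ⊆ ({Option.some (n, 0)} : Set SeqFan)ᶜ} := by
      rintro q hq
      have hq' : q = Option.none := hq
      subst hq'
      exact fun h => Option.some_ne_none _ (mem_singleton_iff.mp h).symm
    filter_upwards [hlim.eventually (hOopen.mem_nhds hAin)] with j hj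
    by_contra h0
    have hmem : Option.some (n, 0) ∈ (u j : Set SeqFan) := by
      rw [hg j]; exact some_mem_Bset.mpr (Nat.pos_of_ne_zero h0)
    exact hj hmem rfl
  choose N hN using fun n => eventually_atTop.mp (hzero n)
  set f : ℕ → ℕ := fun n => (Finset.range (N n)).sup fun j => g j n with hf
  have hbound : ∀ j n, g j n ≤ f n := by
    intro j n
    rcases Nat.lt_or_ge j (N n) with h | h
    · exact Finset.le_sup (f := fun j => g j n) (Finset.mem_range.mpr h)
    · rw [hN n j h]; exact Nat.zero_le _
  -- but the sets eventually meet the tail neighborhood above f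
  have hOopen : IsOpen {B : CL SeqFan | ((B : Set SeqFan) ∩ Utail f).Nonempty} :=
    TopologicalSpace.isOpen_generateFrom_of_mem (Or.inl ⟨Utail f, isOpen_Utail f, rfl⟩)
  have hAin : Apoint ∈ {B : CL SeqFan | ((B : Set SeqFan) ∩ Utail f).Nonempty} :=
    ⟨Option.none, rfl, mem_insert _ _⟩
  obtain ⟨j, hj⟩ := (hlim.eventually (hOopen.mem_nhds hAin)).exists
  obtain ⟨q, hqB, hqU⟩ := hj
  rw [hg j] at hqB
  obtain ⟨n, i, hi, rfl⟩ := hqB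
  rcases hqU with h | ⟨n', i', hi', he⟩
  · exact nomatch h
  · obtain ⟨rfl, rfl⟩ : n = n' ∧ i = i' := by
      have := Option.some.inj he
      exact ⟨congrArg Prod.fst this, congrArg Prod.snd this⟩
    exact absurd hi (Nat.not_lt.mpr (le_trans (hbound j n) (Nat.le_of_lt hi')))
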